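/- Let n ≥ 2, c > 1, and let F ⊆ {-1,1}^n be a set such that every pair of distinct x, y ∈ F satisfies |⟨x,y⟩| ≤ 1/(c√n). Then |F| ≤ (c²n - 1)/(c² - 1). More generally, if every pair of distinct elements satisfies |⟨x,y⟩| ≤ γ with γ² < 1/n, then 1 - 1/|F| ≤ (1 - 1/n)/(1 - γ²). -/

import Mathlib

open Finset

noncomputable def ipNorm (n : ℕ) (x y : Fin n → ℤ) : ℝ := ((∑ i, x i * y i : ℤ) : ℝ) / n


lemma key (n : ℕ) (F : Finset (Fin n → ℤ))
    (hpm : ∀ x ∈ F, ∀ i, x i = 1 ∨ x i = -1) :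
    (n : ℤ) * (F.card : ℤ)^2 ≤ ∑ x ∈ F, ∑ y ∈ F, (∑ i, x i * y i)^2 := by
  have h1 : ∀ x y : Fin n → ℤ, (∑ i, x i * y i)^2
      = ∑ q ∈ (univ ×ˢ univ : Finset (Fin n × Fin n)),
          (x q.1 * x q.2) * (y q.1 * y q.2) := by
    intro x y
    rw [sq, Finset.sum_mul_sum, ← Finset.sum_product']
    exact Finset.sum_congr rfl fun q _ => by ring
  have hswap : ∑ x ∈ F, ∑ y ∈ F, (∑ i, x i * y i)^2
      = ∑ i : Fin n, ∑ j : Fin n, (∑ x ∈ F, x i * x j)^2 := by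
    simp_rw [h1]
    rw [← Finset.sum_product']
    rw [Finset.sum_comm]
    rw [← Finset.sum_product' (f := fun i j => (∑ x ∈ F, x i * x j)^2)]
    apply Finset.sum_congr rfl
    intro q _
    rw [sq, Finset.sum_mul_sum, ← Finset.sum_product']
  rw [hswap]
  have hdiag : ∀ i : Fin n, ((F.card : ℤ))^2 = (∑ x ∈ F, x i * x i)^2 := by
    intro i
    congr 1
    rw [Finset.card_eq_sum_ones]
    push_cast
    apply Finset.sum_congr rfl
    intro x hx
    rcases hpm x hx i with h | h <;> rw [h] <;> ring
  calc (n : ℤ) * (F.card : ℤ)^2 = ∑ i : Fin n, (∑ x ∈ F, x i * x i)^2 := by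
        rw [Finset.sum_congr rfl fun i _ => (hdiag i).symm, Finset.sum_const]
        simp [mul_comm]
    _ ≤ ∑ i : Fin n, ∑ j : Fin n, (∑ x ∈ F, x i * x j)^2 := by
        apply Finset.sum_le_sum
        intro i _
        exact Finset.single_le_sum (f := fun j => (∑ x ∈ F, x i * x j)^2)
          (fun j _ => sq_nonneg _) (Finset.mem_univ i)

lemma part2 (n : ℕ) (hn : 2 ≤ n) (F : Finset (Fin n → ℤ))
    (hpm : ∀ x ∈ F, ∀ i, x i = 1 ∨ x i = -1) (hne : F.Nonempty)
    (γ : ℝ) (hγ : γ ^ 2 < 1 / (n : ℝ))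
    (hb : ∀ x ∈ F, ∀ y ∈ F, x ≠ y → |ipNorm n x y| ≤ γ) :
    1 - 1 / (F.card : ℝ) ≤ (1 - 1 / (n : ℝ)) / (1 - γ ^ 2) := by
  have hn0 : (0:ℝ) < n := by positivity
  have hm0 : (0:ℝ) < (F.card : ℝ) := by exact_mod_cast hne.card_pos
  set m : ℝ := (F.card : ℝ) with hmdef
  have hrow : ∀ x ∈ F, (∑ y ∈ F, (((∑ i, x i * y i : ℤ)):ℝ)^2)
      ≤ (n:ℝ)^2 + (m - 1) * (γ^2 * (n:ℝ)^2) := by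
    intro x hx
    rw [← Finset.add_sum_erase _ _ hx]
    have hdiag : ((∑ i, x i * x i : ℤ):ℝ) = (n:ℝ) := by
      have : (∑ i, x i * x i) = (n:ℤ) := by
        have h1 : ∀ i ∈ (univ : Finset (Fin n)), x i * x i = 1 := by
          intro i _
          rcases hpm x hx i with h|h <;> simp [h]
        rw [Finset.sum_congr rfl h1]
        simp
      rw [this]; simp
    have hoff : ∀ y ∈ F.erase x, (((∑ i, x i * y i : ℤ)):ℝ)^2 ≤ γ^2 * (n:ℝ)^2 := by
      intro y hy
      have hyF : y ∈ F := Finset.mem_of_mem_erase hy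
      have hxy : x ≠ y := fun h => (Finset.ne_of_mem_erase hy) h.symm
      have hip := hb x hx y hyF hxy
      have habs : |((∑ i, x i * y i : ℤ):ℝ)| ≤ γ * n := by
        have : |((∑ i, x i * y i : ℤ):ℝ)| / n ≤ γ := by
          rwa [ipNorm, abs_div, abs_of_pos hn0] at hip
        calc |((∑ i, x i * y i : ℤ):ℝ)| = (|((∑ i, x i * y i : ℤ):ℝ)| / n) * n := by
              field_simp
          _ ≤ γ * n := by apply mul_le_mul_of_nonneg_right this hn0.le
      calc (((∑ i, x i * y i : ℤ)):ℝ)^2 = |((∑ i, x i * y i : ℤ):ℝ)|^2 := (sq_abs _).symm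
        _ ≤ (γ * n)^2 := by
            apply pow_le_pow_left₀ (abs_nonneg _) habs
        _ = γ^2 * (n:ℝ)^2 := by ring
    have hsum : (∑ y ∈ F.erase x, (((∑ i, x i * y i : ℤ)):ℝ)^2)
        ≤ (m - 1) * (γ^2 * (n:ℝ)^2) := by
      calc (∑ y ∈ F.erase x, (((∑ i, x i * y i : ℤ)):ℝ)^2)
          ≤ (F.erase x).card • (γ^2 * (n:ℝ)^2) :=
            Finset.sum_le_card_nsmul _ _ _ hoff
        _ = ((F.erase x).card : ℝ) * (γ^2 * (n:ℝ)^2) := by rw [nsmul_eq_mul]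
        _ = (m - 1) * (γ^2 * (n:ℝ)^2) := by
            rw [Finset.card_erase_of_mem hx]
            congr 1
            have : 1 ≤ F.card := hne.card_pos
            push_cast [this]
            ring
    rw [hdiag]
    nlinarith [hsum]
  have h2 : (n:ℝ) * m^2 ≤ m * ((n:ℝ)^2 + (m - 1) * (γ^2 * (n:ℝ)^2)) := by
    have hk := key n F hpm
    have hk' : (n:ℝ) * m^2 ≤ ∑ x ∈ F, ∑ y ∈ F, (((∑ i, x i * y i : ℤ)):ℝ)^2 := by
      rw [hmdef]
      push_cast
      exact_mod_cast hk
    calc (n:ℝ) * m^2 ≤ ∑ x ∈ F, ∑ y ∈ F, (((∑ i, x i * y i : ℤ)):ℝ)^2 := hk'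
      _ ≤ ∑ _x ∈ F, ((n:ℝ)^2 + (m - 1) * (γ^2 * (n:ℝ)^2)) := Finset.sum_le_sum hrow
      _ = m * ((n:ℝ)^2 + (m - 1) * (γ^2 * (n:ℝ)^2)) := by
          rw [Finset.sum_const, nsmul_eq_mul]
  have h3 : m ≤ (n:ℝ) + (m-1)*γ^2*(n:ℝ) := by
    nlinarith [h2, mul_pos hm0 hn0]
  have hγ1 : γ^2 < 1 := lt_of_lt_of_le hγ (by
    rw [div_le_one hn0]; exact_mod_cast Nat.one_le_of_lt hn)
  rw [le_div_iff₀ (by linarith : (0:ℝ) < 1 - γ^2)]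
  have e1 : 1 - 1/m = (m-1)/m := by field_simp
  have e2 : 1 - 1/(n:ℝ) = ((n:ℝ)-1)/(n:ℝ) := by field_simp
  rw [e1, e2, div_mul_eq_mul_div, div_le_div_iff₀ hm0 hn0]
  nlinarith [h3]

theorem stmt15 (n : ℕ) (hn : 2 ≤ n) (F : Finset (Fin n → ℤ))
    (hpm : ∀ x ∈ F, ∀ i, x i = 1 ∨ x i = -1) (hne : F.Nonempty) :
    (∀ c : ℝ, 1 < c →
      (∀ x ∈ F, ∀ y ∈ F, x ≠ y → |ipNorm n x y| ≤ 1 / (c * Real.sqrt (n : ℝ))) →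
      (F.card : ℝ) ≤ (c ^ 2 * (n : ℝ) - 1) / (c ^ 2 - 1)) ∧
    (∀ γ : ℝ, γ ^ 2 < 1 / (n : ℝ) →
      (∀ x ∈ F, ∀ y ∈ F, x ≠ y → |ipNorm n x y| ≤ γ) →
      1 - 1 / (F.card : ℝ) ≤ (1 - 1 / (n : ℝ)) / (1 - γ ^ 2)) := by
  have hn0 : (0:ℝ) < n := by positivity
  have hm0 : (0:ℝ) < (F.card : ℝ) := by exact_mod_cast hne.card_pos
  constructor
  · intro c hc hb
    have hc2 : (1:ℝ) < c^2 := by nlinarith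
    have hsq : Real.sqrt (n:ℝ) ^ 2 = (n:ℝ) := Real.sq_sqrt hn0.le
    have hγ2 : (1/(c*Real.sqrt (n:ℝ)))^2 = 1/(c^2*(n:ℝ)) := by
      rw [div_pow, mul_pow, hsq]; norm_num
    have hγ : (1/(c*Real.sqrt (n:ℝ)))^2 < 1/(n:ℝ) := by
      rw [hγ2]
      apply div_lt_div_of_pos_left one_pos hn0
      nlinarith [mul_pos (by linarith : (0:ℝ) < c^2 - 1) hn0]
    have hp2 := part2 n hn F hpm hne _ hγ hb
    rw [hγ2] at hp2
    have hn1 : (1:ℝ) ≤ (n:ℝ) := by exact_mod_cast Nat.one_le_of_lt hn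
    have hcn1 : (0:ℝ) < c^2*(n:ℝ) - 1 := by nlinarith
    have hd0 : (0:ℝ) < 1 - 1/(c^2*(n:ℝ)) := by
      rw [sub_pos, div_lt_one (by positivity)]
      linarith
    have hA : (1 - 1/(n:ℝ))/(1 - 1/(c^2*(n:ℝ))) = (c^2*(n:ℝ) - c^2)/(c^2*(n:ℝ)-1) := by
      rw [div_eq_div_iff hd0.ne' hcn1.ne']
      field_simp
    rw [hA] at hp2
    have hsub : 1 - (c^2*(n:ℝ) - c^2)/(c^2*(n:ℝ)-1) = (c^2-1)/(c^2*(n:ℝ)-1) := by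
      field_simp
      ring
    have h4 : (c^2-1)/(c^2*(n:ℝ)-1) ≤ 1/(F.card:ℝ) := by
      rw [← hsub]; linarith
    rw [div_le_div_iff₀ hcn1 hm0] at h4
    rw [le_div_iff₀ (by linarith : (0:ℝ) < c^2-1)]
    linarith
  · intro γ hγ hb
    exact part2 n hn F hpm hne γ hγ hb
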